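/- Let A be a unital ring, let h be a central element of A (e.g. A an associative unital ℝ-algebra and h the image of a real scalar), and let J, S, S' ∈ A satisfy J*S = S*J, S*S = 1 + h^2*(J*J), and S*S' = 1 = S'*S. Then the element g := 1 + h*(J*S) + h^2*(J*J) is invertible with two-sided inverse g' := 1 − h*(J*S'); that is, g*g' = 1 and g'*g = 1. -/
import Mathlib

/-- The transforming operator `g = 1 + hJ₊(1+h²J₊²)^{1/2} + h²J₊²` has two-sided inverse
`g⁻¹ = 1 − hJ₊(1+h²J₊²)^{−1/2}`, in any unital ring, where `S` plays the role of the
square root `(1+h²J₊²)^{1/2}` and `S'` its inverse. -/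
theorem twist_operator_g_invertible {A : Type*} [Ring A] (h J S S' : A)
    (hcentral : ∀ x : A, h * x = x * h)
    (hJS : J * S = S * J)
    (hS : S * S = 1 + h ^ 2 * (J * J))
    (hSS' : S * S' = 1) (hS'S : S' * S = 1) :
    (1 + h * (J * S) + h ^ 2 * (J * J)) * (1 - h * (J * S')) = 1 ∧
    (1 - h * (J * S')) * (1 + h * (J * S) + h ^ 2 * (J * J)) = 1 := by
  have hJS' : J * S' = S' * J := by
    calc J * S' = S' * S * (J * S') := by rw [hS'S, one_mul]
    _ = S' * (S * J) * S' := by noncomm_ring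
    _ = S' * (J * S) * S' := by rw [hJS]
    _ = S' * J * (S * S') := by noncomm_ring
    _ = S' * J := by rw [hSS', mul_one]
  have key : S = S' + h ^ 2 * (J * J) * S' := by
    calc S = (S * S) * S' := by rw [mul_assoc, hSS', mul_one]
    _ = (1 + h ^ 2 * (J * J)) * S' := by rw [hS]
    _ = S' + h ^ 2 * (J * J) * S' := by noncomm_ring
  have hc2 : ∀ x : A, h ^ 2 * x = x * h ^ 2 := by
    intro x
    rw [pow_two, mul_assoc, hcentral, ← mul_assoc, hcentral x, mul_assoc]
  have hmul : ∀ x y : A, (h * x) * (h * y) = h ^ 2 * (x * y) := by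
    intro x y
    calc (h * x) * (h * y) = h * (x * h) * y := by noncomm_ring
    _ = h * (h * x) * y := by rw [← hcentral]
    _ = h ^ 2 * (x * y) := by noncomm_ring
  have hac : (h * (J * S)) * (h * (J * S')) = h ^ 2 * (J * J) := by
    rw [hmul]
    congr 1
    calc (J * S) * (J * S') = J * ((S * J) * S') := by noncomm_ring
    _ = J * ((J * S) * S') := by rw [hJS]
    _ = (J * J) * (S * S') := by noncomm_ring
    _ = J * J := by rw [hSS', mul_one]
  have hca : (h * (J * S')) * (h * (J * S)) = h ^ 2 * (J * J) := by
    rw [hmul]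
    congr 1
    calc (J * S') * (J * S) = J * ((S' * J) * S) := by noncomm_ring
    _ = J * ((J * S') * S) := by rw [hJS']
    _ = (J * J) * (S' * S) := by noncomm_ring
    _ = J * J := by rw [hS'S, mul_one]
  have hp : ∀ x y : A, x * (h * y) = h * (x * y) := by
    intro x y; rw [← mul_assoc, ← hcentral, mul_assoc]
  have hp' : ∀ y : A, S' * (J * y) = J * (S' * y) := by
    intro y; rw [← mul_assoc, ← hJS', mul_assoc]
  have haeq : h * (J * S) = h * (J * S') + (h ^ 2 * (J * J)) * (h * (J * S')) := by
    rw [key]; simp only [pow_two, mul_add, add_mul, mul_assoc, hp]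
  have hbc : (h ^ 2 * (J * J)) * (h * (J * S')) = (h * (J * S')) * (h ^ 2 * (J * J)) := by
    simp only [pow_two, mul_assoc, hp, hp', ← hJS']
  constructor
  · calc (1 + h * (J * S) + h ^ 2 * (J * J)) * (1 - h * (J * S'))
        = 1 + h * (J * S) + h ^ 2 * (J * J) - h * (J * S')
          - (h * (J * S)) * (h * (J * S')) - (h ^ 2 * (J * J)) * (h * (J * S')) := by
          noncomm_ring
    _ = 1 + h * (J * S) + h ^ 2 * (J * J) - h * (J * S')
          - h ^ 2 * (J * J) - (h ^ 2 * (J * J)) * (h * (J * S')) := by rw [hac]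
    _ = 1 + (h * (J * S') + (h ^ 2 * (J * J)) * (h * (J * S'))) + h ^ 2 * (J * J)
          - h * (J * S') - h ^ 2 * (J * J) - (h ^ 2 * (J * J)) * (h * (J * S')) := by
          rw [← haeq]
    _ = 1 := by noncomm_ring
  · calc (1 - h * (J * S')) * (1 + h * (J * S) + h ^ 2 * (J * J))
        = 1 + h * (J * S) + h ^ 2 * (J * J) - h * (J * S')
          - (h * (J * S')) * (h * (J * S)) - (h * (J * S')) * (h ^ 2 * (J * J)) := by
          noncomm_ring
    _ = 1 + h * (J * S) + h ^ 2 * (J * J) - h * (J * S')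
          - h ^ 2 * (J * J) - (h ^ 2 * (J * J)) * (h * (J * S')) := by rw [hca, hbc]
    _ = 1 + (h * (J * S') + (h ^ 2 * (J * J)) * (h * (J * S'))) + h ^ 2 * (J * J)
          - h * (J * S') - h ^ 2 * (J * J) - (h ^ 2 * (J * J)) * (h * (J * S')) := by
          rw [← haeq]
    _ = 1 := by noncomm_ring
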